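/- Consider a finite discounted MDP. Let τ > 0, let π̄ and π* be policies with the support of π* s contained in the support of π̄ s for every s, let v̄ be a value function of π̄ with associated Q-function Q̄, and let v* be a value function of π*. Suppose that for every state s, π* s maximizes the KL-regularized objective at s: for every probability vector π on A with support contained in the support of π̄ s, ∑_a π a * Q̄ s a − τ * KL(π‖π̄ s) ≤ ∑_a π* s a * Q̄ s a − τ * KL(π* s‖π̄ s). Then v* s ≥ v̄ s for every state s. (Policy-improvement claim of the paper's Proposition 1: the optimal policy of conservative policy optimization improves on the reference policy at every state.) -/
import Mathlib


/-- KL divergence of probability vectors on a finite type, summed over the support of `π`. -/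
noncomputable def KL {A : Type*} [Fintype A] (π πbar : A → ℝ) : ℝ :=
  ∑ a ∈ Finset.univ.filter (fun a => π a ≠ 0), π a * Real.log (π a / πbar a)

lemma KL_self {A : Type*} [Fintype A] (π : A → ℝ) : KL π π = 0 := by
  unfold KL
  apply Finset.sum_eq_zero
  intro a ha
  simp only [Finset.mem_filter] at ha
  rw [div_self ha.2, Real.log_one, mul_zero]

lemma KL_nonneg {A : Type*} [Fintype A] (π πbar : A → ℝ)
    (h0 : ∀ a, 0 ≤ π a) (h1 : ∑ a, π a = 1)
    (hb0 : ∀ a, 0 ≤ πbar a) (hb1 : ∑ a, πbar a = 1)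
    (hsupp : ∀ a, πbar a = 0 → π a = 0) : 0 ≤ KL π πbar := by
  unfold KL
  set s := Finset.univ.filter (fun a => π a ≠ 0) with hs
  have key : ∀ a ∈ s, π a - πbar a ≤ π a * Real.log (π a / πbar a) := by
    intro a ha
    simp only [hs, Finset.mem_filter] at ha
    have hπ : 0 < π a := lt_of_le_of_ne (h0 a) (Ne.symm ha.2)
    have hπb : 0 < πbar a := by
      rcases lt_or_eq_of_le (hb0 a) with h | h
      · exact h
      · exact absurd (hsupp a h.symm) ha.2
    have hlog : Real.log (πbar a / π a) ≤ πbar a / π a - 1 :=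
      Real.log_le_sub_one_of_pos (by positivity)
    have hrw : Real.log (π a / πbar a) = - Real.log (πbar a / π a) := by
      rw [← Real.log_inv, inv_div]
    have : 1 - πbar a / π a ≤ Real.log (π a / πbar a) := by
      rw [hrw]; linarith
    have := mul_le_mul_of_nonneg_left this (le_of_lt hπ)
    have hne : π a ≠ 0 := ne_of_gt hπ
    calc π a - πbar a = π a * (1 - πbar a / π a) := by field_simp
      _ ≤ π a * Real.log (π a / πbar a) := this
  have h2 : ∑ a ∈ s, (π a - πbar a) ≤ ∑ a ∈ s, π a * Real.log (π a / πbar a) :=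
    Finset.sum_le_sum key
  have h3 : ∑ a ∈ s, π a = 1 := by
    rw [← h1]
    apply Finset.sum_filter_of_ne
    intro a _ h
    simpa using h
  have h4 : ∑ a ∈ s, πbar a ≤ 1 := by
    rw [← hb1]
    exact Finset.sum_le_sum_of_subset_of_nonneg (Finset.filter_subset _ _)
      (fun a _ _ => hb0 a)
  rw [Finset.sum_sub_distrib, h3] at h2
  linarith

/-- Policy-improvement claim of Proposition 1: if `πstar` maximizes the KL-regularized
objective (w.r.t. the Q-function of `πbar`) at every state, then the value of `πstar`
dominates the value of `πbar` at every state. -/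
theorem stmt_6 {S A : Type*} [Fintype S] [Nonempty S] [Fintype A] [Nonempty A]
    (P : S → A → S → ℝ) (hP0 : ∀ s a s', 0 ≤ P s a s') (hP1 : ∀ s a, ∑ s', P s a s' = 1)
    (r : S → A → ℝ) (γ : ℝ) (hγ0 : 0 ≤ γ) (hγ1 : γ < 1)
    (τ : ℝ) (hτ : 0 < τ)
    (πbar πstar : S → A → ℝ)
    (hbar : ∀ s, (∀ a, 0 ≤ πbar s a) ∧ ∑ a, πbar s a = 1)
    (hstar : ∀ s, (∀ a, 0 ≤ πstar s a) ∧ ∑ a, πstar s a = 1)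
    (hsupp : ∀ s a, πbar s a = 0 → πstar s a = 0)
    (vbar : S → ℝ)
    (hvbar : ∀ s, vbar s =
      (∑ a, πbar s a * r s a) + γ * ∑ s', (∑ a, πbar s a * P s a s') * vbar s')
    (Qbar : S → A → ℝ)
    (hQbar : ∀ s a, Qbar s a = r s a + γ * ∑ s', P s a s' * vbar s')
    (vstar : S → ℝ)
    (hvstar : ∀ s, vstar s =
      (∑ a, πstar s a * r s a) + γ * ∑ s', (∑ a, πstar s a * P s a s') * vstar s')
    (hmax : ∀ s, ∀ π : A → ℝ, (∀ a, 0 ≤ π a) → (∑ a, π a) = 1 →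
      (∀ a, πbar s a = 0 → π a = 0) →
      (∑ a, π a * Qbar s a) - τ * KL π (πbar s) ≤
        (∑ a, πstar s a * Qbar s a) - τ * KL (πstar s) (πbar s)) :
    ∀ s, vbar s ≤ vstar s := by
  -- expansion of ∑ π a * Qbar s a for any π
  have expand : ∀ (π : S → A → ℝ) (s : S),
      (∑ a, π s a * Qbar s a) =
        (∑ a, π s a * r s a) + γ * ∑ s', (∑ a, π s a * P s a s') * vbar s' := by
    intro π s
    simp only [hQbar, mul_add]
    rw [Finset.sum_add_distrib]
    congr 1
    simp only [Finset.mul_sum, Finset.sum_mul]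
    rw [Finset.sum_comm]
    apply Finset.sum_congr rfl; intro a _
    apply Finset.sum_congr rfl; intro s' _
    ring
  -- key inequality: vbar s ≤ ∑ πstar Qbar
  have key : ∀ s, vbar s ≤ ∑ a, πstar s a * Qbar s a := by
    intro s
    have h := hmax s (πbar s) (hbar s).1 (hbar s).2 (fun a h => h)
    rw [KL_self] at h
    have hKL : 0 ≤ KL (πstar s) (πbar s) :=
      KL_nonneg _ _ (hstar s).1 (hstar s).2 (hbar s).1 (hbar s).2 (hsupp s)
    have hvb : vbar s = ∑ a, πbar s a * Qbar s a := by
      rw [expand πbar s, ← hvbar s]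
    nlinarith
  -- δ s ≤ γ * ∑ Pπ* δ
  set δ : S → ℝ := fun s => vbar s - vstar s with hδ
  have step : ∀ s, δ s ≤ γ * ∑ s', (∑ a, πstar s a * P s a s') * δ s' := by
    intro s
    have h1 := key s
    rw [expand πstar s] at h1
    have h2 := hvstar s
    simp only [hδ, mul_sub]
    rw [Finset.sum_sub_distrib, mul_sub]
    linarith
  -- maximizer argument
  obtain ⟨s0, _, hs0⟩ := Finset.exists_max_image (Finset.univ : Finset S) δ
    Finset.univ_nonempty
  have hrow : ∀ s, ∑ s', (∑ a, πstar s a * P s a s') = 1 := by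
    intro s
    rw [Finset.sum_comm]
    calc (∑ a, ∑ s', πstar s a * P s a s') = ∑ a, πstar s a * ∑ s', P s a s' := by
          simp [Finset.mul_sum]
      _ = 1 := by simp [hP1, (hstar s).2]
  have hsum : ∑ s', (∑ a, πstar s0 a * P s0 a s') * δ s' ≤ δ s0 := by
    calc ∑ s', (∑ a, πstar s0 a * P s0 a s') * δ s'
        ≤ ∑ s', (∑ a, πstar s0 a * P s0 a s') * δ s0 := by
          apply Finset.sum_le_sum
          intro s' _
          apply mul_le_mul_of_nonneg_left (hs0 s' (Finset.mem_univ s'))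
          exact Finset.sum_nonneg fun a _ => mul_nonneg ((hstar s0).1 a) (hP0 s0 a s')
      _ = δ s0 := by rw [← Finset.sum_mul, hrow, one_mul]
  have hδ0 : δ s0 ≤ 0 := by
    have := step s0
    have h3 : δ s0 ≤ γ * δ s0 := le_trans this (by nlinarith)
    nlinarith
  intro s
  have := le_trans (hs0 s (Finset.mem_univ s)) hδ0
  simpa [hδ] using this
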